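/- arXiv:1205.5358 — 4 statements merged into one kernel-verified Lean document; each statement's English description precedes it below -/
import Mathlib

section
/- Assume (H1), (H2) and (P), and let κ > 0 be large enough that 𝓛_φ(Λ_{κ,δ}) ⊆ Λ_{λ̂·κ,δ} for some λ̂ ∈ (0,1). Then there exist C > 0 and τ ∈ (0,1) such that for every g ∈ Λ_{κ,δ} with ∫ g dν = 1 and every n ≥ 1, ‖λ^{−n}·𝓛_φ^n g − h‖_α ≤ C·τ^n; that is, the normalized iterates converge to the invariant density h exponentially fast in the Hölder norm. -/
open MeasureTheory Real Set Filter Topology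

/-- The Ruelle–Perron–Frobenius transfer operator of `(f, φ)`:
`(𝓛_φ g)(x) = ∑_{f(y)=x} e^{φ(y)} g(y)`. -/
noncomputable def transferOp {M : Type*} (f : M → M) (φ g : M → ℝ) : M → ℝ :=
  fun x => ∑' y : {y : M // f y = x}, Real.exp (φ y.1) * g y.1

/-- `g` satisfies the `(C, α)`-Hölder estimate on pairs of points at distance `< δ`. -/
def HolderOnBalls {M : Type*} [MetricSpace M] (α δ C : ℝ) (g : M → ℝ) : Prop :=
  ∀ x y : M, dist x y < δ → |g x - g y| ≤ C * dist x y ^ α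

/-- `g` satisfies the global `(C, α)`-Hölder estimate. -/
def HolderBound {M : Type*} [MetricSpace M] (α C : ℝ) (g : M → ℝ) : Prop :=
  ∀ x y : M, |g x - g y| ≤ C * dist x y ^ α

/-- Membership in the cone `Λ_{κ,δ}`: `g` is continuous, positive, and its least local
Hölder constant `|g|_{α,δ}` is at most `κ · inf g`, i.e. `g` satisfies the
`(κ · inf g, α)`-Hölder estimate at distances `< δ`. -/
def memCone {M : Type*} [MetricSpace M] (α δ κ : ℝ) (g : M → ℝ) : Prop :=
  Continuous g ∧ (∀ x, 0 < g x) ∧ HolderOnBalls α δ (κ * (⨅ x, g x)) g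

/-- The Hölder norm `‖g‖_α = sup |g| + |g|_α`. -/
noncomputable def holderNorm {M : Type*} [MetricSpace M] (α : ℝ) (g : M → ℝ) : ℝ :=
  (⨆ x, |g x|) + sInf {C : ℝ | 0 ≤ C ∧ HolderBound α C g}

lemma holder_continuous {M : Type*} [MetricSpace M] {α C : ℝ} (hα : 0 < α) (hC : 0 ≤ C)
    {g : M → ℝ} (hg : HolderBound α C g) : Continuous g := by
  rw [Metric.continuous_iff]
  intro x ε hε
  have hC1 : (0:ℝ) < C + 1 := by linarith
  refine ⟨(ε / (C + 1)) ^ α⁻¹, Real.rpow_pos_of_pos (div_pos hε hC1) _, fun y hy => ?_⟩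
  have h2 : dist y x ^ α < ((ε / (C+1)) ^ α⁻¹) ^ α :=
    Real.rpow_lt_rpow dist_nonneg hy hα
  rw [Real.rpow_inv_rpow (le_of_lt (div_pos hε hC1)) (ne_of_gt hα)] at h2
  rw [Real.dist_eq]
  have h3 : C * dist y x ^ α ≤ C * (ε/(C+1)) := mul_le_mul_of_nonneg_left h2.le hC
  have h4 : C * (ε/(C+1)) < ε := by
    rw [mul_div_assoc'] ; rw [div_lt_iff₀ hC1] ; nlinarith
  exact lt_of_le_of_lt (hg y x) (lt_of_le_of_lt h3 h4)

lemma exists_forall_inf {M : Type*} [MetricSpace M] [CompactSpace M] [Nonempty M]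
    (g : M → ℝ) (hg : Continuous g) :
    ∃ x₀ : M, (⨅ x, g x) = g x₀ ∧ ∀ x, g x₀ ≤ g x := by
  obtain ⟨x₀, -, hx₀⟩ := isCompact_univ.exists_isMinOn univ_nonempty hg.continuousOn
  have hmin : ∀ x, g x₀ ≤ g x := fun x => isMinOn_iff.mp hx₀ x (mem_univ x)
  exact ⟨x₀, le_antisymm (ciInf_le ⟨g x₀, by rintro v ⟨x, rfl⟩; exact hmin x⟩ x₀) (le_ciInf hmin), hmin⟩

lemma exists_forall_sup {M : Type*} [MetricSpace M] [CompactSpace M] [Nonempty M]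
    (g : M → ℝ) (hg : Continuous g) :
    ∃ x₁ : M, (⨆ x, g x) = g x₁ ∧ ∀ x, g x ≤ g x₁ := by
  obtain ⟨x₁, -, hx₁⟩ := isCompact_univ.exists_isMaxOn univ_nonempty hg.continuousOn
  have hmax : ∀ x, g x ≤ g x₁ := fun x => isMaxOn_iff.mp hx₁ x (mem_univ x)
  exact ⟨x₁, le_antisymm (ciSup_le hmax) (le_ciSup ⟨g x₁, by rintro v ⟨x, rfl⟩; exact hmax x⟩ x₁), hmax⟩

lemma transferOp_comb {M : Type*} (f : M → M) (φ : M → ℝ)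
    (hfin : ∀ x : M, Finite {y : M // f y = x}) (a c : ℝ) (u v : M → ℝ) (x : M) :
    transferOp f φ (fun y => a * u y + c * v y) x
      = a * transferOp f φ u x + c * transferOp f φ v x := by
  haveI := hfin x
  letI := Fintype.ofFinite {y : M // f y = x}
  simp only [transferOp, tsum_fintype]
  rw [Finset.mul_sum, Finset.mul_sum, ← Finset.sum_add_distrib]
  exact Finset.sum_congr rfl fun y _ => by ring

lemma memCone_smul {M : Type*} [MetricSpace M] [CompactSpace M] [Nonempty M]
    {α δ κ c : ℝ} {u : M → ℝ} (hc : 0 < c) (hu : memCone α δ κ u) :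
    memCone α δ κ (fun x => c * u x) := by
  obtain ⟨huc, hup, huh⟩ := hu
  obtain ⟨x₀, hinf, hmin⟩ := exists_forall_inf u huc
  have h1 : (⨅ x, c * u x) = c * u x₀ := by
    refine le_antisymm (ciInf_le ⟨c * u x₀, ?_⟩ x₀) (le_ciInf fun x => by nlinarith [hmin x])
    rintro v ⟨x, rfl⟩
    exact mul_le_mul_of_nonneg_left (hmin x) hc.le
  refine ⟨continuous_const.mul huc, fun x => mul_pos hc (hup x), ?_⟩
  intro x y hxy
  have h2 := huh x y hxy
  rw [hinf] at h2
  rw [h1]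
  calc |c * u x - c * u y| = c * |u x - u y| := by
        rw [← mul_sub, abs_mul, abs_of_pos hc]
    _ ≤ c * (κ * u x₀ * dist x y ^ α) := mul_le_mul_of_nonneg_left h2 hc.le
    _ = κ * (c * u x₀) * dist x y ^ α := by ring


set_option maxHeartbeats 2000000 in
/-- Corollary (exponential convergence to the density): if `κ > 0` is large enough that
`𝓛_φ(Λ_{κ,δ}) ⊆ Λ_{λ̂κ,δ}` for some `λ̂ ∈ (0,1)`, then there are `C > 0`, `τ ∈ (0,1)` with
`‖λ^{-n} 𝓛_φ^n g - h‖_α ≤ C τⁿ` for every `g ∈ Λ_{κ,δ}` with `∫ g dν = 1` and `n ≥ 1`. -/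
theorem exponential_convergence_to_density
    {M : Type*} [MetricSpace M] [CompactSpace M] [ConnectedSpace M]
    [MeasurableSpace M] [BorelSpace M]
    -- `f` is a local homeomorphism with `L(x)`-Lipschitz local inverses,
    -- every point having exactly `deg` preimages
    (f : M → M) (hfc : Continuous f)
    (Lc : M → ℝ) (hLc : Continuous Lc)
    (hloc : ∀ x : M, ∃ U : Set M, IsOpen U ∧ x ∈ U ∧ Set.InjOn f U ∧
      IsOpen (f '' U) ∧ ∀ y ∈ U, ∀ z ∈ U, dist y z ≤ Lc x * dist (f y) (f z))
    (deg q : ℕ) (hdeg : ∀ x : M, Nat.card {y : M // f y = x} = deg)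
    -- (H1)
    (σ L : ℝ) (hσ : 1 < σ) (hL : 1 ≤ L)
    (A : Set M) (hA : IsOpen A)
    (hH1 : ∀ x : M, (x ∈ A → Lc x ≤ L) ∧ (x ∉ A → Lc x ≤ σ⁻¹))
    -- (H2)
    (hH2 : ∃ 𝒰 : Finset (Set M), (∀ U ∈ 𝒰, IsOpen U ∧ Set.InjOn f U) ∧
      (⋃ U ∈ 𝒰, U) = Set.univ ∧ ∃ 𝒰' ⊆ 𝒰, 𝒰'.card = q ∧ A ⊆ ⋃ U ∈ 𝒰', U)
    (hq : q < deg)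
    (α : ℝ) (hα0 : 0 < α) (hα1 : α ≤ 1)
    -- `δ`: every ball of radius `δ` has at most `q` connected components of its
    -- `f`-preimage meeting `A`
    (δ : ℝ) (hδ0 : 0 < δ)
    (hδA : ∀ x : M,
      {C : Set M | (∃ y ∈ f ⁻¹' Metric.ball x δ,
          C = connectedComponentIn (f ⁻¹' Metric.ball x δ) y) ∧ (C ∩ A).Nonempty}.Finite ∧
      {C : Set M | (∃ y ∈ f ⁻¹' Metric.ball x δ,
          C = connectedComponentIn (f ⁻¹' Metric.ball x δ) y) ∧ (C ∩ A).Nonempty}.ncard ≤ q)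
    -- `m`: local-to-global Hölder constant
    (m : ℝ) (hm : 1 ≤ m)
    (hmδ : ∀ (C : ℝ) (g : M → ℝ), 0 ≤ C → HolderOnBalls α δ C g → HolderBound α (C * m) g)
    -- (P)
    (φ : M → ℝ) (hφH : ∃ C, 0 ≤ C ∧ HolderBound α C φ)
    (εφ : ℝ) (hεφ0 : 0 < εφ) (hεφq : εφ < Real.log deg - Real.log q)
    (hεφ : Real.exp εφ *
        ((((deg : ℝ) - q) * σ ^ (-α) + q * L ^ α * (1 + (L - 1) ^ α)) / deg) +
        2 * εφ * m * L ^ α * Metric.diam (Set.univ : Set M) ^ α < 1)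
    (hP1 : (⨆ x, φ x) - (⨅ x, φ x) < εφ)
    (hP2 : ∃ C, 0 ≤ C ∧ C < εφ * Real.exp (⨅ x, φ x) ∧
      HolderBound α C (fun x => Real.exp (φ x)))
    -- the conformal measure `ν` with `𝓛_φ^* ν = λ ν`
    (lam : ℝ) (hlam : 0 < lam)
    (ν : Measure M) [IsProbabilityMeasure ν]
    (hconf : ∀ g : M → ℝ, Continuous g →
      ∫ x, transferOp f φ g x ∂ν = lam * ∫ x, g x ∂ν)
    -- the invariant density `h`
    (h : M → ℝ) (hhH : ∃ C, 0 ≤ C ∧ HolderBound α C h)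
    (hhfix : ∀ x, transferOp f φ h x = lam * h x)
    (hhint : ∫ x, h x ∂ν = 1)
    (hhpos : ∃ a b : ℝ, 0 < a ∧ ∀ x, a ≤ h x ∧ h x ≤ b)
    (κ : ℝ) (hκ0 : 0 < κ)
    (hκ : ∃ lamhat : ℝ, 0 < lamhat ∧ lamhat < 1 ∧
      ∀ g : M → ℝ, memCone α δ κ g → memCone α δ (lamhat * κ) (transferOp f φ g)) :
    ∃ C τ : ℝ, 0 < C ∧ 0 < τ ∧ τ < 1 ∧
      ∀ g : M → ℝ, memCone α δ κ g → ∫ x, g x ∂ν = 1 →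
        ∀ n : ℕ, 1 ≤ n →
          holderNorm α (fun x => (lam ^ n)⁻¹ * (transferOp f φ)^[n] g x - h x) ≤
            C * τ ^ n := by
  classical
  obtain ⟨lamhat, hl0, hl1, hcone⟩ := hκ
  obtain ⟨Ch, hCh0, hChB⟩ := hhH
  obtain ⟨a, b, ha0, hab⟩ := hhpos
  have hlam' : lam ≠ 0 := ne_of_gt hlam
  have hne : Nonempty M := by
    by_contra hne
    rw [not_nonempty_iff] at hne
    have h1 : ν Set.univ = 1 := measure_univ
    rw [Set.univ_eq_empty_iff.mpr hne, measure_empty] at h1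
    exact zero_ne_one h1
  have hcont_h : Continuous h := holder_continuous hα0 hCh0 hChB
  have hIntc : ∀ u : M → ℝ, Continuous u → Integrable u ν := by
    intro u hu
    have := hu.continuousOn.integrableOn_compact (μ := ν) isCompact_univ
    rwa [integrableOn_univ] at this
  have hb1 : (1:ℝ) ≤ b := by
    have h1 : ∫ x, h x ∂ν ≤ ∫ _x, b ∂ν :=
      integral_mono (hIntc h hcont_h) (integrable_const b) fun x => (hab x).2
    rwa [hhint, integral_const, probReal_univ, one_smul] at h1
  set D := Metric.diam (Set.univ : Set M) ^ α with hD
  have hD0 : 0 ≤ D := Real.rpow_nonneg Metric.diam_nonneg α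
  have hdistD : ∀ x y : M, dist x y ^ α ≤ D := fun x y =>
    Real.rpow_le_rpow dist_nonneg
      (Metric.dist_le_diam_of_mem isCompact_univ.isBounded (mem_univ x) (mem_univ y)) hα0.le
  set K := κ * m * D with hKdef
  have hm0 : (0:ℝ) < m := by linarith
  have hK0 : 0 ≤ K := mul_nonneg (mul_nonneg hκ0.le hm0.le) hD0
  have hfin : ∀ x : M, Finite {y : M // f y = x} := by
    intro x
    refine Nat.finite_of_card_ne_zero ?_
    rw [hdeg x]
    omega
  -- bounds for normalized cone elements
  have hbounds : ∀ (κ' : ℝ) (w : M → ℝ), 0 < κ' → κ' ≤ κ → memCone α δ κ' w →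
      ∫ x, w x ∂ν = 1 →
      (1 ≤ (⨅ x, w x) * (1 + K) ∧ (⨅ x, w x) ≤ 1 ∧ (∀ x, w x ≤ 1 + K) ∧
        ∀ x, (⨅ y, w y) ≤ w x) := by
    intro κ' w hκ'0 hκ'κ hw hwint
    obtain ⟨hwc, hwp, hwh⟩ := hw
    obtain ⟨x₀, hinf, hmin⟩ := exists_forall_inf w hwc
    obtain ⟨x₁, hsup, hmax⟩ := exists_forall_sup w hwc
    have hx₀pos : 0 < w x₀ := hwp x₀
    have hglob : HolderBound α (κ' * (⨅ x, w x) * m) w := by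
      refine hmδ _ w ?_ hwh
      rw [hinf]
      positivity
    have h2 : w x₁ - w x₀ ≤ κ' * w x₀ * m * D := by
      have h3 := le_trans (le_abs_self _) (hglob x₁ x₀)
      rw [hinf] at h3
      have h4 : κ' * w x₀ * m * dist x₁ x₀ ^ α ≤ κ' * w x₀ * m * D :=
        mul_le_mul_of_nonneg_left (hdistD x₁ x₀) (by positivity)
      nlinarith
    have hKw : κ' * w x₀ * m * D ≤ K * w x₀ := by
      rw [hKdef]
      nlinarith [hx₀pos.le, hD0, hm0.le, mul_nonneg (mul_nonneg hx₀pos.le hm0.le) hD0]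
    have hinf1 : w x₀ ≤ 1 := by
      have h1 : ∫ _x, w x₀ ∂ν ≤ ∫ x, w x ∂ν :=
        integral_mono (integrable_const _) (hIntc w hwc) hmin
      rwa [hwint, integral_const, probReal_univ, one_smul] at h1
    have hsup1 : 1 ≤ w x₁ := by
      have h1 : ∫ x, w x ∂ν ≤ ∫ _x, w x₁ ∂ν :=
        integral_mono (hIntc w hwc) (integrable_const _) hmax
      rwa [hwint, integral_const, probReal_univ, one_smul] at h1
    have hsupbd : w x₁ ≤ (1 + K) * w x₀ := by
      have hexp : (1 + K) * w x₀ = w x₀ + K * w x₀ := by ring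
      linarith
    refine ⟨?_, by rw [hinf]; exact hinf1, fun x => ?_, fun x => by rw [hinf]; exact hmin x⟩
    · rw [hinf]; nlinarith
    · have h5 := hmax x; nlinarith
  -- choice of t
  have hbpos : (0:ℝ) < b := by linarith
  have h1K : (0:ℝ) < 1 + K := by linarith
  have hden1 : (0:ℝ) < 2*(1+K)*(b+1) := by nlinarith
  have hden2 : (0:ℝ) < (1+K)*(Ch + κ*b + 1) := by
    have hx : (0:ℝ) < Ch + κ*b + 1 := by nlinarith [mul_pos hκ0 hbpos]
    exact mul_pos h1K hx
  have hnl : (0:ℝ) ≤ (1-lamhat)*κ := le_of_lt (mul_pos (by linarith) hκ0)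
  set t := min (1/(2*(1+K)*(b+1))) ((1-lamhat)*κ/((1+K)*(Ch + κ*b + 1))) with htdef
  have ht0 : 0 < t := lt_min (by positivity) (div_pos (by nlinarith) hden2)
  have htA : t * (2*(1+K)*(b+1)) ≤ 1 := by
    have h1 : t ≤ 1/(2*(1+K)*(b+1)) := min_le_left _ _
    rw [le_div_iff₀ hden1] at h1
    linarith
  have htB : t * ((1+K)*(Ch + κ*b + 1)) ≤ (1-lamhat)*κ := by
    have h1 : t ≤ (1-lamhat)*κ/((1+K)*(Ch+κ*b+1)) := min_le_right _ _
    rw [le_div_iff₀ hden2] at h1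
    linarith
  have ht1 : t < 1 := by nlinarith
  have h1t : (0:ℝ) < 1 - t := by linarith
  -- decomposition of normalized cone elements along h
  have hdecomp : ∀ w : M → ℝ, memCone α δ (lamhat*κ) w → ∫ x, w x ∂ν = 1 →
      ∃ w' : M → ℝ, memCone α δ κ w' ∧ (∫ x, w' x ∂ν = 1) ∧
        ∀ x, w x = (1-t) * w' x + t * h x := by
    intro w hw hwint
    have hlκ : 0 < lamhat * κ := mul_pos hl0 hκ0
    obtain ⟨hge1, hle1, hub, hlb⟩ := hbounds (lamhat*κ) w hlκ (by nlinarith) hw hwint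
    obtain ⟨hwc, hwp, hwh⟩ := hw
    have hwx_ge : ∀ x, 1 ≤ w x * (1+K) := fun x =>
      le_trans hge1 (mul_le_mul_of_nonneg_right (hlb x) h1K.le)
    have hth : ∀ x, t * h x * (2*(1+K)) ≤ 1 := by
      intro x
      have h1 : t * h x ≤ t * b := mul_le_mul_of_nonneg_left (hab x).2 ht0.le
      nlinarith [ht0.le, hK0]
    have hpos' : ∀ x, 0 < w x - t * h x := by
      intro x
      nlinarith [hwx_ge x, hth x, hK0]
    have hiw0 : 0 < ⨅ x, w x := by nlinarith [hge1, hK0]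
    have hinf' : (1-t)⁻¹ * ((⨅ x, w x) - t*b) ≤ ⨅ x, (1-t)⁻¹ * (w x - t * h x) := by
      apply le_ciInf
      intro x
      apply mul_le_mul_of_nonneg_left _ (inv_pos.mpr h1t).le
      have h1 := hlb x
      have h2 : t * h x ≤ t * b := mul_le_mul_of_nonneg_left (hab x).2 ht0.le
      linarith
    have key : t * (Ch + κ * b) ≤ (1 - lamhat) * κ * (⨅ x, w x) := by
      nlinarith [mul_le_mul_of_nonneg_left hge1 hnl, htB, mul_pos ht0 h1K, hCh0,
        hκ0.le, hbpos.le, mul_nonneg ht0.le hK0]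
    refine ⟨fun x => (1-t)⁻¹ * (w x - t * h x),
      ⟨continuous_const.mul (hwc.sub (continuous_const.mul hcont_h)),
        fun x => mul_pos (inv_pos.mpr h1t) (hpos' x), ?_⟩, ?_, ?_⟩
    · intro x y hxy
      have hwxy := hwh x y hxy
      have hhxy := hChB x y
      have hda : (0:ℝ) ≤ dist x y ^ α := Real.rpow_nonneg dist_nonneg α
      have he : (1-t)⁻¹ * (w x - t*h x) - (1-t)⁻¹ * (w y - t*h y)
          = (1-t)⁻¹ * ((w x - w y) - t*(h x - h y)) := by ring
      rw [he, abs_mul, abs_of_pos (inv_pos.mpr h1t)]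
      have h12 : |(w x - w y) - t*(h x - h y)| ≤ |w x - w y| + |t*(h x - h y)| :=
        abs_sub _ _
      rw [abs_mul, abs_of_pos ht0] at h12
      have h13 : |(w x - w y) - t*(h x - h y)|
          ≤ (lamhat*κ*(⨅ x, w x) + t*Ch) * dist x y ^ α := by
        have h14 : t * |h x - h y| ≤ t * (Ch * dist x y ^ α) :=
          mul_le_mul_of_nonneg_left hhxy ht0.le
        nlinarith
      have h15 : (1-t)⁻¹ * ((lamhat*κ*(⨅ x, w x) + t*Ch) * dist x y ^ α)
          ≤ κ * (⨅ x, (1-t)⁻¹ * (w x - t * h x)) * dist x y ^ α := by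
        have h16 : (1-t)⁻¹ * (lamhat*κ*(⨅ x, w x) + t*Ch)
            ≤ κ * ((1-t)⁻¹ * ((⨅ x, w x) - t*b)) := by
          have h16' : lamhat*κ*(⨅ x, w x) + t*Ch ≤ κ*((⨅ x, w x) - t*b) := by
            nlinarith [key]
          calc (1-t)⁻¹ * (lamhat*κ*(⨅ x, w x) + t*Ch)
              ≤ (1-t)⁻¹ * (κ*((⨅ x, w x) - t*b)) :=
                mul_le_mul_of_nonneg_left h16' (inv_pos.mpr h1t).le
            _ = κ * ((1-t)⁻¹ * ((⨅ x, w x) - t*b)) := by ring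
        have h17 : κ * ((1-t)⁻¹ * ((⨅ x, w x) - t*b))
            ≤ κ * (⨅ x, (1-t)⁻¹ * (w x - t * h x)) :=
          mul_le_mul_of_nonneg_left hinf' hκ0.le
        have h18 := le_trans h16 h17
        calc (1-t)⁻¹ * ((lamhat*κ*(⨅ x, w x) + t*Ch) * dist x y ^ α)
            = ((1-t)⁻¹ * (lamhat*κ*(⨅ x, w x) + t*Ch)) * dist x y ^ α := by ring
          _ ≤ κ * (⨅ x, (1-t)⁻¹ * (w x - t * h x)) * dist x y ^ α :=
              mul_le_mul_of_nonneg_right h18 hda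
      refine le_trans (mul_le_mul_of_nonneg_left h13 (inv_pos.mpr h1t).le) ?_
      exact h15
    · rw [MeasureTheory.integral_const_mul]
      rw [integral_sub (hIntc w hwc) ((hIntc h hcont_h).const_mul t),
        MeasureTheory.integral_const_mul, hwint, hhint, mul_one]
      field_simp
    · intro x
      field_simp
      ring
  -- normalized iterates
  have hTnorm : ∀ u : M → ℝ, Continuous u → ∫ x, u x ∂ν = 1 →
      ∫ x, lam⁻¹ * transferOp f φ u x ∂ν = 1 := by
    intro u hu huint
    rw [MeasureTheory.integral_const_mul, hconf u hu, huint, mul_one, inv_mul_cancel₀ hlam']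
  refine ⟨(1 + K + b + (κ*m + Ch)) / (1-t), 1 - t, div_pos (by nlinarith) h1t, h1t,
    by linarith, ?_⟩
  intro g hg hgint
  have key : ∀ n : ℕ, 1 ≤ n → ∃ w : M → ℝ, memCone α δ (lamhat*κ) w ∧
      (∫ x, w x ∂ν = 1) ∧
      ∀ x, (transferOp f φ)^[n] g x = lam^n * (h x + (1-t)^(n-1) * (w x - h x)) := by
    intro n hn
    induction n, hn using Nat.le_induction with
    | base =>
        have h1 := hcone g hg
        refine ⟨fun x => lam⁻¹ * transferOp f φ g x,
          memCone_smul (inv_pos.mpr hlam) h1, hTnorm g hg.1 hgint, ?_⟩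
        intro x
        simp only [Function.iterate_one, pow_one, Nat.sub_self, pow_zero, one_mul]
        rw [show h x + (lam⁻¹ * transferOp f φ g x - h x) = lam⁻¹ * transferOp f φ g x
          from by ring, mul_inv_cancel_left₀ hlam']
    | succ n hn ih =>
        obtain ⟨w, hw, hwint, hwe⟩ := ih
        obtain ⟨w', hw', hw'int, hwd⟩ := hdecomp w hw hwint
        have h1 := hcone w' hw'
        refine ⟨fun x => lam⁻¹ * transferOp f φ w' x,
          memCone_smul (inv_pos.mpr hlam) h1, hTnorm w' hw'.1 hw'int, ?_⟩
        intro x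
        have hfeq : (transferOp f φ)^[n] g =
            fun y => (lam^n * (1 - (1-t)^(n-1) + (1-t)^(n-1)*t)) * h y
              + (lam^n * ((1-t)^(n-1)*(1-t))) * w' y := by
          funext y
          rw [hwe y, hwd y]
          ring
        rw [Function.iterate_succ_apply', hfeq,
          transferOp_comb f φ hfin _ _ h w' x, hhfix x]
        have hpow : (1-t)^(n+1-1) = (1-t)^(n-1) * (1-t) := by
          rw [← pow_succ]
          congr 1
          omega
        rw [hpow, pow_succ]
        field_simp
        ring
  intro n hn
  obtain ⟨w, hw, hwint, hwe⟩ := key n hn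
  obtain ⟨hge1, hle1, hub, hlb⟩ :=
    hbounds (lamhat*κ) w (mul_pos hl0 hκ0) (by nlinarith) hw hwint
  have hs0 : (0:ℝ) ≤ (1-t)^(n-1) := pow_nonneg h1t.le _
  have hfun : (fun x => (lam^n)⁻¹ * (transferOp f φ)^[n] g x - h x)
      = fun x => (1-t)^(n-1) * (w x - h x) := by
    funext x
    rw [hwe x, inv_mul_cancel_left₀ (pow_ne_zero n hlam')]
    ring
  rw [hfun]
  have hiw0 : 0 < ⨅ x, w x := by nlinarith [hge1, hK0, h1K]
  obtain ⟨hwc, hwp, hwh⟩ := hw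
  have hglob : HolderBound α (lamhat*κ*(⨅ x, w x)*m) w :=
    hmδ _ w (by positivity) hwh
  have hB1 : ∀ x, |(1-t)^(n-1) * (w x - h x)| ≤ (1-t)^(n-1) * (1 + K + b) := by
    intro x
    rw [abs_mul, abs_of_nonneg hs0]
    apply mul_le_mul_of_nonneg_left _ hs0
    rw [abs_le]
    constructor
    · nlinarith [(hab x).2, hwp x]
    · nlinarith [(hab x).1, ha0, hub x]
  have hsupb : (⨆ x, |(1-t)^(n-1) * (w x - h x)|) ≤ (1-t)^(n-1) * (1+K+b) :=
    ciSup_le hB1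
  have hB2 : HolderBound α ((1-t)^(n-1) * (κ*m + Ch))
      (fun x => (1-t)^(n-1) * (w x - h x)) := by
    intro x y
    have hda : (0:ℝ) ≤ dist x y ^ α := Real.rpow_nonneg dist_nonneg α
    have h8 : lamhat * (⨅ x, w x) ≤ 1 :=
      mul_le_one₀ hl1.le hiw0.le hle1
    have h9 : (0:ℝ) ≤ κ*m - lamhat*κ*(⨅ x, w x)*m := by
      nlinarith [mul_nonneg (mul_nonneg hκ0.le hm0.le)
        (by linarith : (0:ℝ) ≤ 1 - lamhat*(⨅ x, w x))]
    have h6 : |w x - w y| ≤ (κ*m) * dist x y ^ α := by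
      have h7 := hglob x y
      nlinarith [mul_nonneg h9 hda]
    have h10 := hChB x y
    have he : (1-t)^(n-1)*(w x - h x) - (1-t)^(n-1)*(w y - h y)
        = (1-t)^(n-1)*((w x - w y) - (h x - h y)) := by ring
    rw [he, abs_mul, abs_of_nonneg hs0]
    have h11 : |(w x - w y) - (h x - h y)| ≤ (κ*m + Ch) * dist x y ^ α := by
      have h12 : |(w x - w y) - (h x - h y)| ≤ |w x - w y| + |h x - h y| :=
        abs_sub _ _
      rw [add_mul]
      linarith
    calc (1-t)^(n-1) * |(w x - w y) - (h x - h y)|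
        ≤ (1-t)^(n-1) * ((κ*m + Ch) * dist x y ^ α) :=
          mul_le_mul_of_nonneg_left h11 hs0
      _ = ((1-t)^(n-1) * (κ*m + Ch)) * dist x y ^ α := by ring
  have hsinfb : sInf {C : ℝ | 0 ≤ C ∧ HolderBound α C
      (fun x => (1-t)^(n-1) * (w x - h x))} ≤ (1-t)^(n-1) * (κ*m + Ch) := by
    apply csInf_le ⟨0, fun c hc => hc.1⟩
    exact ⟨mul_nonneg hs0 (add_nonneg (mul_nonneg hκ0.le hm0.le) hCh0), hB2⟩
  have hpown : (1-t)^n = (1-t)^(n-1) * (1-t) := by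
    rw [← pow_succ]
    congr 1
    omega
  calc holderNorm α (fun x => (1-t)^(n-1) * (w x - h x))
      = (⨆ x, |(1-t)^(n-1) * (w x - h x)|) + sInf {C : ℝ | 0 ≤ C ∧ HolderBound α C
          (fun x => (1-t)^(n-1) * (w x - h x))} := rfl
    _ ≤ (1-t)^(n-1) * (1+K+b) + (1-t)^(n-1) * (κ*m + Ch) := add_le_add hsupb hsinfb
    _ = (1 + K + b + (κ*m + Ch)) / (1-t) * (1-t)^n := by
        rw [hpown]
        field_simp
end

section
/- Let M be a compact connected metric space with more than one point, α ∈ (0,1], δ > 0 and κ > 0, and let m ≥ 1 be a constant such that every function g : M → ℝ with |g(x)−g(y)| ≤ C·d(x,y)^α whenever d(x,y) < δ satisfies |g(x)−g(y)| ≤ C·m·d(x,y)^α for all x,y ∈ M. Then for every λ̂ ∈ (0,1), all φ₁, φ₂ ∈ Λ_{λ̂·κ,δ} satisfy Θ_κ(φ₁,φ₂) ≤ 2·log((1+λ̂)/(1−λ̂)) + 2·log(1 + m·λ̂·κ·diam(M)^α); in particular the cone Λ_{λ̂·κ,δ} has finite diameter with respect to the projective metric Θ_κ of the cone Λ_{κ,δ}.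 -/
open MeasureTheory Real Set Filter Topology

/-- `A_κ(φ₁, φ₂) = sup { r > 0 : φ₂ - r·φ₁ ∈ Λ_{κ,δ} ∪ {0} }`. -/
noncomputable def coneA {M : Type*} [MetricSpace M] (α δ κ : ℝ) (φ₁ φ₂ : M → ℝ) : ℝ :=
  sSup {r : ℝ | 0 < r ∧
    (memCone α δ κ (fun x => φ₂ x - r * φ₁ x) ∨ ∀ x, φ₂ x - r * φ₁ x = 0)}

/-- `B_κ(φ₁, φ₂) = inf { r > 0 : r·φ₁ - φ₂ ∈ Λ_{κ,δ} ∪ {0} }`. -/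
noncomputable def coneB {M : Type*} [MetricSpace M] (α δ κ : ℝ) (φ₁ φ₂ : M → ℝ) : ℝ :=
  sInf {r : ℝ | 0 < r ∧
    (memCone α δ κ (fun x => r * φ₁ x - φ₂ x) ∨ ∀ x, r * φ₁ x - φ₂ x = 0)}

/-- The projective metric `Θ_κ(φ₁, φ₂) = log (B_κ(φ₁,φ₂) / A_κ(φ₁,φ₂))` of the cone
`Λ_{κ,δ}`. -/
noncomputable def coneTheta {M : Type*} [MetricSpace M] (α δ κ : ℝ) (φ₁ φ₂ : M → ℝ) : ℝ :=
  Real.log (coneB α δ κ φ₁ φ₂ / coneA α δ κ φ₁ φ₂)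

set_option maxHeartbeats 1600000 in
/-- Proposition (finite projective diameter): for `λ̂ ∈ (0,1)`, any
`φ₁, φ₂ ∈ Λ_{λ̂κ,δ}` satisfy
`Θ_κ(φ₁,φ₂) ≤ 2 log((1+λ̂)/(1-λ̂)) + 2 log(1 + m λ̂ κ (diam M)^α)`;
in particular `Λ_{λ̂κ,δ}` has finite `Θ_κ`-diameter. -/
theorem cone_finite_diameter
    {M : Type*} [MetricSpace M] [CompactSpace M] [ConnectedSpace M] [Nontrivial M]
    (α δ κ m : ℝ) (hα0 : 0 < α) (hα1 : α ≤ 1) (hδ0 : 0 < δ) (hκ0 : 0 < κ)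
    (hm : 1 ≤ m)
    (hmδ : ∀ (C : ℝ) (g : M → ℝ), 0 ≤ C → HolderOnBalls α δ C g → HolderBound α (C * m) g)
    (lamhat : ℝ) (hl0 : 0 < lamhat) (hl1 : lamhat < 1)
    (φ₁ φ₂ : M → ℝ)
    (hφ₁ : memCone α δ (lamhat * κ) φ₁) (hφ₂ : memCone α δ (lamhat * κ) φ₂) :
    coneTheta α δ κ φ₁ φ₂ ≤
      2 * Real.log ((1 + lamhat) / (1 - lamhat)) +
        2 * Real.log (1 + m * lamhat * κ * Metric.diam (Set.univ : Set M) ^ α) := by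
  classical
  have hne : Nonempty M := inferInstance
  set D : ℝ := Metric.diam (Set.univ : Set M) with hD
  set Q : ℝ := 1 + m * lamhat * κ * D ^ α with hQdef
  have hD0 : (0:ℝ) ≤ D := Metric.diam_nonneg
  have hDα : (0:ℝ) ≤ D ^ α := Real.rpow_nonneg hD0 α
  have hQ1 : (1:ℝ) ≤ Q := by
    have h : (0:ℝ) ≤ m * lamhat * κ * D ^ α := by positivity
    simp only [hQdef]; linarith
  have hQ0 : (0:ℝ) < Q := by linarith
  have hl1' : (0:ℝ) < 1 - lamhat := by linarith
  -- basic bounds for any element of the cone Λ_{λκ,δ}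
  have key : ∀ φ : M → ℝ, memCone α δ (lamhat * κ) φ →
      0 < (⨅ x, φ x) ∧ (∀ x, (⨅ x, φ x) ≤ φ x) ∧ (∀ x, φ x ≤ (⨅ x, φ x) * Q) := by
    intro φ hφ
    obtain ⟨x₀, -, hx₀⟩ := IsCompact.exists_isMinOn isCompact_univ Set.univ_nonempty hφ.1.continuousOn
    have hbdd : BddBelow (Set.range φ) := ⟨φ x₀, by rintro _ ⟨y, rfl⟩; exact hx₀ (mem_univ y)⟩
    have hle : ∀ x, (⨅ x, φ x) ≤ φ x := fun x => ciInf_le hbdd x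
    have hge : φ x₀ ≤ ⨅ x, φ x := le_ciInf fun y => hx₀ (mem_univ y)
    have hpos : 0 < ⨅ x, φ x := lt_of_lt_of_le (hφ.2.1 x₀) hge
    refine ⟨hpos, hle, ?_⟩
    intro x
    have hC : (0:ℝ) ≤ lamhat * κ * (⨅ x, φ x) := by positivity
    have hHB := hmδ _ φ hC hφ.2.2
    have hdist : dist x x₀ ≤ D :=
      Metric.dist_le_diam_of_mem isCompact_univ.isBounded (mem_univ x) (mem_univ x₀)
    have hdα : dist x x₀ ^ α ≤ D ^ α := Real.rpow_le_rpow dist_nonneg hdist hα0.le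
    have h1 : |φ x - φ x₀| ≤ lamhat * κ * (⨅ x, φ x) * m * (D ^ α) := by
      calc |φ x - φ x₀| ≤ lamhat * κ * (⨅ x, φ x) * m * dist x x₀ ^ α := hHB x x₀
        _ ≤ lamhat * κ * (⨅ x, φ x) * m * (D ^ α) := by
            have hC' : (0:ℝ) ≤ lamhat * κ * (⨅ x, φ x) * m := by positivity
            exact mul_le_mul_of_nonneg_left hdα hC'
    have h2 : φ x - φ x₀ ≤ lamhat * κ * (⨅ x, φ x) * m * (D ^ α) := (abs_le.1 h1).2
    have hexp : (⨅ x, φ x) * Q = (⨅ x, φ x) + lamhat * κ * (⨅ x, φ x) * m * (D ^ α) := by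
      simp only [hQdef]; ring
    linarith
  obtain ⟨hI₁pos, hI₁le, hI₁ub⟩ := key φ₁ hφ₁
  obtain ⟨hI₂pos, hI₂le, hI₂ub⟩ := key φ₂ hφ₂
  set I₁ : ℝ := ⨅ x, φ₁ x with hI₁def
  set I₂ : ℝ := ⨅ x, φ₂ x with hI₂def
  set r₁ : ℝ := (Q + lamhat) * I₂ / ((1 - lamhat) * I₁) with hr₁def
  set r₀ : ℝ := (1 - lamhat) * I₂ / ((Q + lamhat) * I₁) with hr₀def
  have hQl0 : (0:ℝ) < Q + lamhat := by linarith
  have hr₁pos : 0 < r₁ := by rw [hr₁def]; positivity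
  have hr₀pos : 0 < r₀ := by rw [hr₀def]; positivity
  -- membership of r₁ in the defining set of B
  set c₁ : ℝ := r₁ * I₁ - Q * I₂ with hc₁def
  have hc₁ : c₁ = lamhat * I₂ * (1 + Q) / (1 - lamhat) := by
    rw [hc₁def, hr₁def]; field_simp; ring
  have hc₁pos : 0 < c₁ := by rw [hc₁]; positivity
  have hψ₁lb : ∀ x, c₁ ≤ r₁ * φ₁ x - φ₂ x := by
    intro x
    have h1 : r₁ * I₁ ≤ r₁ * φ₁ x := mul_le_mul_of_nonneg_left (hI₁le x) hr₁pos.le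
    have h2 : φ₂ x ≤ I₂ * Q := hI₂ub x
    rw [hc₁def]; nlinarith
  have hψ₁inf : c₁ ≤ ⨅ x, (r₁ * φ₁ x - φ₂ x) := le_ciInf hψ₁lb
  have hr₁mem : r₁ ∈ {r : ℝ | 0 < r ∧
      (memCone α δ κ (fun x => r * φ₁ x - φ₂ x) ∨ ∀ x, r * φ₁ x - φ₂ x = 0)} := by
    refine ⟨hr₁pos, Or.inl ⟨(continuous_const.mul hφ₁.1).sub hφ₂.1,
      fun x => lt_of_lt_of_le hc₁pos (hψ₁lb x), ?_⟩⟩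
    intro x y hxy
    have hα' : (0:ℝ) ≤ dist x y ^ α := Real.rpow_nonneg dist_nonneg α
    have h1 := hφ₁.2.2 x y hxy
    have h2 := hφ₂.2.2 x y hxy
    have hkey : lamhat * κ * (r₁ * I₁ + I₂) = κ * c₁ := by
      rw [hc₁, hr₁def]; field_simp; ring
    calc |(r₁ * φ₁ x - φ₂ x) - (r₁ * φ₁ y - φ₂ y)|
        = |r₁ * (φ₁ x - φ₁ y) - (φ₂ x - φ₂ y)| := by ring_nf
      _ ≤ |r₁ * (φ₁ x - φ₁ y)| + |φ₂ x - φ₂ y| := abs_sub _ _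
      _ = r₁ * |φ₁ x - φ₁ y| + |φ₂ x - φ₂ y| := by
          rw [abs_mul, abs_of_nonneg hr₁pos.le]
      _ ≤ r₁ * (lamhat * κ * I₁ * dist x y ^ α) + lamhat * κ * I₂ * dist x y ^ α := by
          gcongr
      _ = lamhat * κ * (r₁ * I₁ + I₂) * dist x y ^ α := by ring
      _ = κ * c₁ * dist x y ^ α := by rw [hkey]
      _ ≤ κ * (⨅ x, (r₁ * φ₁ x - φ₂ x)) * dist x y ^ α := by
          have := mul_le_mul_of_nonneg_left hψ₁inf hκ0.le
          exact mul_le_mul_of_nonneg_right this hα'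
  -- membership of r₀ in the defining set of A
  set c₀ : ℝ := I₂ - r₀ * (I₁ * Q) with hc₀def
  have hc₀ : c₀ = lamhat * I₂ * (1 + Q) / (Q + lamhat) := by
    rw [hc₀def, hr₀def]; field_simp; ring
  have hc₀pos : 0 < c₀ := by rw [hc₀]; positivity
  have hψ₀lb : ∀ x, c₀ ≤ φ₂ x - r₀ * φ₁ x := by
    intro x
    have h1 : r₀ * φ₁ x ≤ r₀ * (I₁ * Q) := mul_le_mul_of_nonneg_left (hI₁ub x) hr₀pos.le
    have h2 : I₂ ≤ φ₂ x := hI₂le x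
    rw [hc₀def]; linarith
  have hψ₀inf : c₀ ≤ ⨅ x, (φ₂ x - r₀ * φ₁ x) := le_ciInf hψ₀lb
  have hr₀mem : r₀ ∈ {r : ℝ | 0 < r ∧
      (memCone α δ κ (fun x => φ₂ x - r * φ₁ x) ∨ ∀ x, φ₂ x - r * φ₁ x = 0)} := by
    refine ⟨hr₀pos, Or.inl ⟨hφ₂.1.sub (continuous_const.mul hφ₁.1),
      fun x => lt_of_lt_of_le hc₀pos (hψ₀lb x), ?_⟩⟩
    intro x y hxy
    have hα' : (0:ℝ) ≤ dist x y ^ α := Real.rpow_nonneg dist_nonneg α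
    have h1 := hφ₁.2.2 x y hxy
    have h2 := hφ₂.2.2 x y hxy
    have hkey : lamhat * κ * (I₂ + r₀ * I₁) = κ * c₀ := by
      rw [hc₀, hr₀def]; field_simp; ring
    calc |(φ₂ x - r₀ * φ₁ x) - (φ₂ y - r₀ * φ₁ y)|
        = |(φ₂ x - φ₂ y) - r₀ * (φ₁ x - φ₁ y)| := by ring_nf
      _ ≤ |φ₂ x - φ₂ y| + |r₀ * (φ₁ x - φ₁ y)| := abs_sub _ _
      _ = |φ₂ x - φ₂ y| + r₀ * |φ₁ x - φ₁ y| := by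
          rw [abs_mul, abs_of_nonneg hr₀pos.le]
      _ ≤ lamhat * κ * I₂ * dist x y ^ α + r₀ * (lamhat * κ * I₁ * dist x y ^ α) := by
          gcongr
      _ = lamhat * κ * (I₂ + r₀ * I₁) * dist x y ^ α := by ring
      _ = κ * c₀ * dist x y ^ α := by rw [hkey]
      _ ≤ κ * (⨅ x, (φ₂ x - r₀ * φ₁ x)) * dist x y ^ α := by
          have := mul_le_mul_of_nonneg_left hψ₀inf hκ0.le
          exact mul_le_mul_of_nonneg_right this hα'
  -- the point we evaluate at
  obtain ⟨z⟩ := hne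
  have hφ₁z : 0 < φ₁ z := hφ₁.2.1 z
  -- bounds on A
  have hSAbdd : BddAbove {r : ℝ | 0 < r ∧
      (memCone α δ κ (fun x => φ₂ x - r * φ₁ x) ∨ ∀ x, φ₂ x - r * φ₁ x = 0)} := by
    refine ⟨φ₂ z / φ₁ z, ?_⟩
    rintro r ⟨-, hr⟩
    have h : r * φ₁ z ≤ φ₂ z := by
      rcases hr with h | h
      · have h' : 0 < φ₂ z - r * φ₁ z := h.2.1 z
        linarith
      · have h' : φ₂ z - r * φ₁ z = 0 := h z
        linarith
    exact (le_div_iff₀ hφ₁z).2 h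
  have hA : r₀ ≤ coneA α δ κ φ₁ φ₂ := by
    unfold coneA
    exact le_csSup hSAbdd hr₀mem
  have hApos : 0 < coneA α δ κ φ₁ φ₂ := lt_of_lt_of_le hr₀pos hA
  -- bounds on B
  have hB : coneB α δ κ φ₁ φ₂ ≤ r₁ := by
    unfold coneB
    exact csInf_le ⟨0, fun r hr => hr.1.le⟩ hr₁mem
  have hBpos : 0 < coneB α δ κ φ₁ φ₂ := by
    have hb : I₂ / (Q * I₁) ≤ coneB α δ κ φ₁ φ₂ := by
      unfold coneB
      apply le_csInf ⟨r₁, hr₁mem⟩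
      rintro r ⟨hr0, hr⟩
      have h : φ₂ z ≤ r * φ₁ z := by
        rcases hr with h | h
        · have h' : 0 < r * φ₁ z - φ₂ z := h.2.1 z
          linarith
        · have h' : r * φ₁ z - φ₂ z = 0 := h z
          linarith
      have h2 : φ₁ z ≤ I₁ * Q := hI₁ub z
      have h3 : I₂ ≤ r * (Q * I₁) := by nlinarith [hI₂le z]
      exact (div_le_iff₀ (by positivity)).2 h3
    have : (0:ℝ) < I₂ / (Q * I₁) := by positivity
    linarith
  -- final estimate
  have hfrac : coneB α δ κ φ₁ φ₂ / coneA α δ κ φ₁ φ₂ ≤ r₁ / r₀ :=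
    div_le_div₀ hr₁pos.le hB hr₀pos hA
  have hrr : r₁ / r₀ = ((Q + lamhat) / (1 - lamhat)) ^ 2 := by
    rw [hr₁def, hr₀def]
    field_simp
  have hmono : ((Q + lamhat) / (1 - lamhat)) ^ 2 ≤ ((1 + lamhat) / (1 - lamhat) * Q) ^ 2 := by
    have h1 : Q + lamhat ≤ (1 + lamhat) * Q := by nlinarith
    have h2 : (Q + lamhat) / (1 - lamhat) ≤ (1 + lamhat) / (1 - lamhat) * Q := by
      rw [div_mul_eq_mul_div]
      exact (div_le_div_iff_of_pos_right hl1').2 h1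
    have h0 : 0 ≤ (Q + lamhat) / (1 - lamhat) := by positivity
    exact pow_le_pow_left₀ h0 h2 2
  have hlog : Real.log (((1 + lamhat) / (1 - lamhat) * Q) ^ 2) =
      2 * Real.log ((1 + lamhat) / (1 - lamhat)) + 2 * Real.log Q := by
    rw [Real.log_pow, Real.log_mul (by positivity) (by positivity)]
    push_cast
    ring
  calc coneTheta α δ κ φ₁ φ₂
      = Real.log (coneB α δ κ φ₁ φ₂ / coneA α δ κ φ₁ φ₂) := rfl
    _ ≤ Real.log (((1 + lamhat) / (1 - lamhat) * Q) ^ 2) := by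
        apply Real.log_le_log (by positivity)
        calc coneB α δ κ φ₁ φ₂ / coneA α δ κ φ₁ φ₂ ≤ r₁ / r₀ := hfrac
          _ = ((Q + lamhat) / (1 - lamhat)) ^ 2 := hrr
          _ ≤ ((1 + lamhat) / (1 - lamhat) * Q) ^ 2 := hmono
    _ = 2 * Real.log ((1 + lamhat) / (1 - lamhat)) + 2 * Real.log Q := hlog
end

section
/- Let M be a metric space such that for all y, z ∈ M and every 0 < t < d(y,z) there exists w ∈ M with d(z,w) = t and d(y,w) = d(y,z) − t (as holds for the geodesic distance on a compact connected Riemannian manifold). Let α ∈ (0,1], δ > 0, C ≥ 0 and 0 < r ≤ 1. If φ : M → ℝ satisfies |φ(x) − φ(y)| ≤ C·d(x,y)^α for all x, y with d(x,y) ≤ δ, then |φ(x) − φ(y)| ≤ C·(1 + r^α)·d(x,y)^α for all x, y with d(x,y) ≤ (1+r)·δ. -/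
/-- Lemma (extending local Hölder bounds): in a metric space where geodesic-like
intermediate points exist, a `(C,α)`-Hölder bound on balls of radius `δ` yields a
`(C(1+r^α),α)`-Hölder bound on balls of radius `(1+r)δ`, for `0 < r ≤ 1`. -/
theorem holder_on_larger_balls
    {M : Type*} [MetricSpace M]
    (hgeo : ∀ y z : M, ∀ t : ℝ, 0 < t → t < dist y z →
      ∃ w : M, dist z w = t ∧ dist y w = dist y z - t)
    (α δ C r : ℝ) (hα0 : 0 < α) (hα1 : α ≤ 1) (hδ0 : 0 < δ) (hC : 0 ≤ C)
    (hr0 : 0 < r) (hr1 : r ≤ 1)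
    (φ : M → ℝ)
    (hφ : ∀ x y : M, dist x y ≤ δ → |φ x - φ y| ≤ C * dist x y ^ α) :
    ∀ x y : M, dist x y ≤ (1 + r) * δ →
      |φ x - φ y| ≤ C * (1 + r ^ α) * dist x y ^ α := by
  intro x y hxy
  set d := dist x y with hd
  have hd0 : 0 ≤ d := dist_nonneg
  have hrα : 0 ≤ r ^ α := Real.rpow_nonneg hr0.le α
  by_cases hle : d ≤ δ
  · have h1 := hφ x y hle
    have : C * d ^ α ≤ C * (1 + r ^ α) * d ^ α := by
      have hdα : 0 ≤ d ^ α := Real.rpow_nonneg hd0 α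
      nlinarith [mul_nonneg (mul_nonneg hC hrα) hdα]
    linarith
  · push_neg at hle
    have hd0' : 0 < d := lt_trans hδ0 hle
    have h1r : (0:ℝ) < 1 + r := by linarith
    set t := r * d / (1 + r) with ht
    have ht0 : 0 < t := by positivity
    have htd : t < d := by
      rw [ht, div_lt_iff₀ h1r]
      nlinarith
    obtain ⟨w, hyw, hxw⟩ := hgeo x y t ht0 htd
    have hdt : d - t = d / (1 + r) := by rw [ht]; field_simp; ring
    have hdt_le : d - t ≤ δ := by
      rw [hdt, div_le_iff₀ h1r]; linarith
    have ht_le : t ≤ δ := by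
      rw [ht, div_le_iff₀ h1r]; nlinarith
    have key1 : |φ x - φ w| ≤ C * (d - t) ^ α := by
      have := hφ x w (by rw [hxw]; exact hdt_le)
      rwa [hxw] at this
    have key2 : |φ w - φ y| ≤ C * t ^ α := by
      have := hφ w y (by rw [dist_comm, hyw]; exact ht_le)
      rwa [dist_comm, hyw] at this
    have tri : |φ x - φ y| ≤ |φ x - φ w| + |φ w - φ y| := by
      have := abs_sub_le (φ x) (φ w) (φ y)
      linarith [abs_sub_le (φ x) (φ w) (φ y)]
    have hpow1 : (d - t) ^ α ≤ d ^ α :=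
      Real.rpow_le_rpow (by linarith) (by linarith) hα0.le
    have hpow2 : t ^ α = r ^ α * (d / (1 + r)) ^ α := by
      rw [ht, mul_div_assoc, Real.mul_rpow hr0.le (by positivity)]
    have hpow3 : (d / (1 + r)) ^ α ≤ d ^ α :=
      Real.rpow_le_rpow (by positivity) (by rw [div_le_iff₀ h1r]; nlinarith) hα0.le
    have : t ^ α ≤ r ^ α * d ^ α := by
      rw [hpow2]; exact mul_le_mul_of_nonneg_left hpow3 hrα
    calc |φ x - φ y| ≤ C * (d - t) ^ α + C * t ^ α := by linarith
      _ ≤ C * d ^ α + C * (r ^ α * d ^ α) := by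
          have := mul_le_mul_of_nonneg_left hpow1 hC
          have := mul_le_mul_of_nonneg_left ‹t ^ α ≤ r ^ α * d ^ α› hC
          linarith
      _ = C * (1 + r ^ α) * d ^ α := by ring
end

section
/- Let φ : S¹ → ℝ be any Lipschitz function such that φ(x) = |x| for all x with |x| ≤ 1/8 and φ(x) = 0 for all x with 1/5 ≤ |x| ≤ 1/2 (such φ exists with Lip(φ) = 1). Then for every n ≥ 1 the Lipschitz seminorm of 𝓛_{f_n}φ − 𝓛_f φ satisfies Lip(𝓛_{f_n}φ − 𝓛_f φ) ≥ 1. In particular the operators 𝓛_{f_n} do not converge to 𝓛_f, even in the strong operator topology, on the space of Lipschitz functions on S¹, although f_n → f in the C^∞ topology. -/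
/-- The Ruelle–Perron–Frobenius operator with potential `0` of a map `g` on the circle
`S¹ = ℝ/ℤ`: `(𝓛_g φ)(x) = ∑_{g(y)=x} φ(y)`. -/
noncomputable def transfer0 (g : AddCircle (1 : ℝ) → AddCircle (1 : ℝ))
    (φ : AddCircle (1 : ℝ) → ℝ) (x : AddCircle (1 : ℝ)) : ℝ :=
  ∑' y : {y : AddCircle (1 : ℝ) // g y = x}, φ y.1


lemma addc_eq_iff (a b : ℝ) : ((a : AddCircle (1:ℝ)) = (b : AddCircle (1:ℝ))) ↔ ∃ k : ℤ, (k:ℝ) = a - b := by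
  rw [← sub_eq_zero, ← AddCircle.coe_sub, AddCircle.coe_eq_zero_iff]
  constructor
  · rintro ⟨k, hk⟩; exact ⟨k, by simpa [zsmul_eq_mul] using hk⟩
  · rintro ⟨k, hk⟩; exact ⟨k, by simpa [zsmul_eq_mul] using hk⟩

lemma fiber_double (v : ℝ) (y : AddCircle (1:ℝ)) :
    y + y = ((v:ℝ) : AddCircle (1:ℝ)) ↔
      y = ((v/2 : ℝ) : AddCircle (1:ℝ)) ∨ y = ((v/2 + 1/2 : ℝ) : AddCircle (1:ℝ)) := by
  constructor
  · intro h
    obtain ⟨u, rfl⟩ := QuotientAddGroup.mk_surjective y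
    rw [show ((u : AddCircle (1:ℝ)) + u) = ((u + u : ℝ) : AddCircle (1:ℝ)) by
      rw [AddCircle.coe_add]] at h
    obtain ⟨k, hk⟩ := (addc_eq_iff _ _).1 h
    rcases Int.even_or_odd k with ⟨m, hm⟩ | ⟨m, hm⟩
    · left
      rw [addc_eq_iff]
      exact ⟨m, by subst hm; push_cast at hk ⊢; linarith⟩
    · right
      rw [addc_eq_iff]
      exact ⟨m, by subst hm; push_cast at hk ⊢; linarith⟩
  · rintro (rfl | rfl) <;> rw [← AddCircle.coe_add]
    · norm_num
    · rw [show (v/2+1/2) + (v/2+1/2) = v + 1 by ring, AddCircle.coe_add]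
      simp

lemma transfer0_pair (g : AddCircle (1:ℝ) → AddCircle (1:ℝ)) (φ : AddCircle (1:ℝ) → ℝ)
    (x a b : AddCircle (1:ℝ)) (hab : a ≠ b)
    (h : ∀ y, g y = x ↔ y = a ∨ y = b) :
    transfer0 g φ x = φ a + φ b := by
  classical
  unfold transfer0
  have h' : ∀ y, y ∈ ({a, b} : Finset (AddCircle (1:ℝ))) ↔ g y = x := by
    intro y; simp [h y]
  rw [← (Equiv.subtypeEquivRight h').tsum_eq (fun y : {y // g y = x} => φ y.1)]
  have := tsum_fintype (L := SummationFilter.unconditional _) (fun y : {y : AddCircle (1:ℝ) // y ∈ ({a, b} : Finset _)} => φ y.1)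
  rw [show (fun y : {y // y ∈ ({a,b} : Finset (AddCircle (1:ℝ)))} =>
      φ ((Equiv.subtypeEquivRight h') y).1) = fun y => φ y.1 from rfl, this,
    Finset.sum_coe_sort ({a,b} : Finset (AddCircle (1:ℝ))) (fun y => φ y), Finset.sum_pair hab]

lemma norm_small (r : ℝ) (h : |r| ≤ 1/8) : ‖((r:ℝ) : AddCircle (1:ℝ))‖ = |r| := by
  rw [UnitAddCircle.norm_eq, round_eq, show ⌊r + 1/2⌋ = 0 from
    Int.floor_eq_zero_iff.2 ⟨by cases abs_le.1 h; linarith, by cases abs_le.1 h; linarith⟩]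
  norm_num

lemma norm_big (r : ℝ) (h1 : 1/5 ≤ r) (h2 : r ≤ 4/5) : 1/5 ≤ ‖((r:ℝ) : AddCircle (1:ℝ))‖ := by
  have := UnitAddCircle.norm_eq (x := r)
  rw [this]
  rcases le_or_gt (round r) 0 with hk | hk
  · have : ((round r : ℤ) : ℝ) ≤ 0 := by exact_mod_cast hk
    rw [abs_of_nonneg (by linarith)]; linarith
  · have : (1 : ℝ) ≤ ((round r : ℤ) : ℝ) := by exact_mod_cast hk
    rw [abs_of_nonpos (by linarith)]; linarith

lemma half_ne (v : ℝ) : ((v/2 : ℝ) : AddCircle (1:ℝ)) ≠ ((v/2 + 1/2 : ℝ) : AddCircle (1:ℝ)) := by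
  intro hne
  obtain ⟨k, hk⟩ := (addc_eq_iff _ _).1 hne
  have h2 : (2 * k : ℤ) = (-1 : ℤ) := by
    have : (2 * (k:ℝ)) = -1 := by linarith
    exact_mod_cast this
  omega

lemma transfer0_double (φ : AddCircle (1:ℝ) → ℝ) (v : ℝ) :
    transfer0 (fun z => z + z) φ ((v:ℝ) : AddCircle (1:ℝ)) =
      φ ((v/2 : ℝ) : AddCircle (1:ℝ)) + φ ((v/2 + 1/2 : ℝ) : AddCircle (1:ℝ)) :=
  transfer0_pair _ _ _ _ _ (half_ne v) (fun y => fiber_double v y)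

lemma transfer0_shift (φ : AddCircle (1:ℝ) → ℝ) (c v : ℝ) :
    transfer0 (fun z => z + z + ((c:ℝ) : AddCircle (1:ℝ))) φ ((v:ℝ) : AddCircle (1:ℝ)) =
      φ (((v-c)/2 : ℝ) : AddCircle (1:ℝ)) + φ (((v-c)/2 + 1/2 : ℝ) : AddCircle (1:ℝ)) := by
  apply transfer0_pair _ _ _ _ _ (half_ne (v-c))
  intro y
  rw [← fiber_double (v-c) y, AddCircle.coe_sub]
  exact eq_sub_iff_add_eq.symm


/-- Example (discontinuity of the transfer operator on Lipschitz functions): with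
`f(x) = 2x` and `f_n(x) = 2(x + 1/(10n))` on `S¹`, for any Lipschitz `φ` with
`φ(x) = |x|` for `|x| ≤ 1/8` and `φ(x) = 0` for `1/5 ≤ |x| ≤ 1/2`, the Lipschitz
seminorm of `𝓛_{f_n} φ - 𝓛_f φ` is at least `1` for every `n ≥ 1`; in particular
`𝓛_{f_n}` does not converge to `𝓛_f` in the strong operator topology on Lipschitz
functions, although `f_n → f` smoothly. -/
theorem transfer_operator_not_continuous
    (φ : AddCircle (1 : ℝ) → ℝ) (K : NNReal) (hφLip : LipschitzWith K φ)
    (hφ1 : ∀ x : AddCircle (1 : ℝ), ‖x‖ ≤ 1 / 8 → φ x = ‖x‖)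
    (hφ2 : ∀ x : AddCircle (1 : ℝ), 1 / 5 ≤ ‖x‖ → φ x = 0) :
    ∀ n : ℕ, 1 ≤ n → ∀ K' : ℝ,
      (∀ x y : AddCircle (1 : ℝ),
        |(transfer0 (fun z => z + z + (((1 : ℝ) / (5 * (n : ℝ)) : ℝ) : AddCircle (1 : ℝ))) φ x -
            transfer0 (fun z => z + z) φ x) -
          (transfer0 (fun z => z + z + (((1 : ℝ) / (5 * (n : ℝ)) : ℝ) : AddCircle (1 : ℝ))) φ y -
            transfer0 (fun z => z + z) φ y)| ≤ K' * dist x y) →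
      1 ≤ K' := by
  intro n hn K' h
  have hn1 : (1:ℝ) ≤ (n:ℝ) := by exact_mod_cast hn
  set c : ℝ := (1:ℝ) / (5 * (n:ℝ)) with hc
  set t : ℝ := (1:ℝ) / (10 * (n:ℝ)) with htd
  have hnpos : (0:ℝ) < (n:ℝ) := by linarith
  have htpos : 0 < t := by positivity
  have hct : c = 2 * t := by field_simp [hc, htd]; ring
  have ht10 : t ≤ 1/10 := by
    rw [htd, div_le_div_iff₀ (by positivity) (by norm_num)]; linarith
  -- φ evaluations
  have phi_small : ∀ r : ℝ, |r| ≤ 1/8 → φ ((r:ℝ) : AddCircle (1:ℝ)) = |r| := by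
    intro r hr
    rw [hφ1 _ (by rw [norm_small r hr]; exact hr), norm_small r hr]
  have phi_big : ∀ r : ℝ, 1/5 ≤ r → r ≤ 4/5 → φ ((r:ℝ) : AddCircle (1:ℝ)) = 0 := by
    intro r h1 h2
    exact hφ2 _ (norm_big r h1 h2)
  have h0 := h (((0:ℝ)) : AddCircle (1:ℝ)) (((t:ℝ)) : AddCircle (1:ℝ))
  rw [transfer0_shift, transfer0_shift, transfer0_double, transfer0_double] at h0
  have e1 : φ (((0 - c)/2 : ℝ) : AddCircle (1:ℝ)) = t := by
    rw [phi_small _ (by rw [abs_le]; constructor <;> linarith)]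
    rw [abs_of_nonpos (by linarith)]; linarith
  have e2 : φ (((0 - c)/2 + 1/2 : ℝ) : AddCircle (1:ℝ)) = 0 := by
    apply phi_big <;> linarith
  have e3 : φ (((0:ℝ)/2 : ℝ) : AddCircle (1:ℝ)) = 0 := by
    rw [phi_small _ (by norm_num)]; norm_num
  have e4 : φ (((0:ℝ)/2 + 1/2 : ℝ) : AddCircle (1:ℝ)) = 0 := by
    apply phi_big <;> norm_num
  have e5 : φ (((t - c)/2 : ℝ) : AddCircle (1:ℝ)) = t/2 := by
    rw [phi_small _ (by rw [abs_le]; constructor <;> linarith)]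
    rw [abs_of_nonpos (by linarith)]; linarith
  have e6 : φ (((t - c)/2 + 1/2 : ℝ) : AddCircle (1:ℝ)) = 0 := by
    apply phi_big <;> linarith
  have e7 : φ ((t/2 : ℝ) : AddCircle (1:ℝ)) = t/2 := by
    rw [phi_small _ (by rw [abs_le]; constructor <;> linarith)]
    rw [abs_of_nonneg (by linarith)]
  have e8 : φ ((t/2 + 1/2 : ℝ) : AddCircle (1:ℝ)) = 0 := by
    apply phi_big <;> linarith
  rw [e1, e2, e3, e4, e5, e6, e7, e8] at h0
  have hdist : dist (((0:ℝ)) : AddCircle (1:ℝ)) (((t:ℝ)) : AddCircle (1:ℝ)) = t := by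
    rw [dist_eq_norm, ← AddCircle.coe_sub, norm_small _ (by rw [abs_le]; constructor <;> linarith)]
    rw [abs_of_nonpos (by linarith)]; linarith
  rw [hdist] at h0
  have habs : |t + 0 - 0 - 0 - (t/2 + 0 - (t/2 + 0))| = t := by
    rw [abs_of_nonneg (by linarith)]; ring
  rw [show (t + 0 - (0 + 0) - (t/2 + 0 - (t/2 + 0))) = t by ring] at h0
  rw [abs_of_nonneg (by linarith)] at h0
  calc (1:ℝ) = t / t := by rw [div_self (ne_of_gt htpos)]
    _ ≤ K' := by rw [div_le_iff₀ htpos]; linarith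
end
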